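/- For every nonnegative integer n, the partisan chocolate game positions PC(2n, 0) and PC(2n+1, 1) are equivalent (equal as normal-play game values). -/

import Mathlib

universe u

namespace SetTheory

/-- Pre-games, as in the older Mathlib's `SetTheory.PGame` (removed from current Mathlib). -/
inductive PGame : Type (u + 1)
  | mk : ∀ α β : Type u, (α → PGame) → (β → PGame) → PGame

namespace PGame

/-- The pair `(x ≤ y, x ⧏ y)`, defined by the usual simultaneous recursion. -/
noncomputable def leLF (x : PGame.{u}) : PGame.{u} → Prop × Prop :=
  PGame.rec (motive := fun _ => PGame.{u} → Prop × Prop)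
    (fun _ _ _ _ IHl IHr y =>
      PGame.rec (motive := fun _ => Prop × Prop)
        (fun yl yr yL yR JHl JHr =>
          ((∀ i, (IHl i (mk yl yr yL yR)).2) ∧ ∀ j, (JHr j).2,
            (∃ i, (JHl i).1) ∨ ∃ j, (IHr j (mk yl yr yL yR)).1)) y) x

/-- The order on pre-games. -/
noncomputable instance : LE PGame.{u} :=
  ⟨fun x y => (leLF x y).1⟩

/-- Two pre-games are equivalent if each is `≤` the other. -/
def Equiv (x y : PGame.{u}) : Prop :=
  x ≤ y ∧ y ≤ x

end PGame

end SetTheory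

open SetTheory

/-- The partisan chocolate game position `PC n m`.
Left options: `PC n' m` with `n' < n` and `n' + m` even, and `PC n m'` with `m' < m` and
`n + m'` even. Right options: the same with "odd" in place of "even". -/
def PC : ℕ → ℕ → SetTheory.PGame
  | n, m =>
    SetTheory.PGame.mk
      {p : ℕ × ℕ // (p.2 = m ∧ p.1 < n ∧ Even (p.1 + m)) ∨ (p.1 = n ∧ p.2 < m ∧ Even (n + p.2))}
      {p : ℕ × ℕ // (p.2 = m ∧ p.1 < n ∧ Odd (p.1 + m)) ∨ (p.1 = n ∧ p.2 < m ∧ Odd (n + p.2))}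
      (fun p => PC p.1.1 p.1.2)
      (fun p => PC p.1.1 p.1.2)
termination_by n m => n + m
decreasing_by
  all_goals rcases p.2 with ⟨h1, h2, -⟩ | ⟨h1, h2, -⟩ <;> omega

namespace SetTheory

namespace PGame

def LeftMoves : PGame.{u} → Type u
  | mk l _ _ _ => l

def RightMoves : PGame.{u} → Type u
  | mk _ r _ _ => r

def moveLeft : (x : PGame.{u}) → x.LeftMoves → PGame.{u}
  | mk _ _ L _ => L

def moveRight : (x : PGame.{u}) → x.RightMoves → PGame.{u}
  | mk _ _ _ R => R

def LF (x y : PGame.{u}) : Prop :=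
  (leLF x y).2

infix:50 " ⧏ " => SetTheory.PGame.LF

theorem le_iff_forall_lf {x y : PGame.{u}} :
    x ≤ y ↔ (∀ i, x.moveLeft i ⧏ y) ∧ ∀ j, x ⧏ y.moveRight j := by
  cases x; cases y; exact Iff.rfl

theorem lf_iff_exists_le {x y : PGame.{u}} :
    x ⧏ y ↔ (∃ i, x ≤ y.moveLeft i) ∨ ∃ j, x.moveRight j ≤ y := by
  cases x; cases y; exact Iff.rfl

theorem lf_of_le_moveLeft {x y : PGame.{u}} {i : y.LeftMoves} (h : x ≤ y.moveLeft i) : x ⧏ y :=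
  lf_iff_exists_le.2 (Or.inl ⟨i, h⟩)

theorem lf_of_moveRight_le {x y : PGame.{u}} {j : x.RightMoves} (h : x.moveRight j ≤ y) : x ⧏ y :=
  lf_iff_exists_le.2 (Or.inr ⟨j, h⟩)

protected theorem le_rfl {x : PGame.{u}} : x ≤ x := by
  induction x with
  | mk l r L R ihl ihr =>
    rw [le_iff_forall_lf]
    exact ⟨fun i => lf_of_le_moveLeft (i := i) (ihl i), fun j => lf_of_moveRight_le (j := j) (ihr j)⟩

end PGame

end SetTheory

open SetTheory.PGame
lemma PC_eq (n m : ℕ) : PC n m =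
    SetTheory.PGame.mk
      {p : ℕ × ℕ // (p.2 = m ∧ p.1 < n ∧ Even (p.1 + m)) ∨ (p.1 = n ∧ p.2 < m ∧ Even (n + p.2))}
      {p : ℕ × ℕ // (p.2 = m ∧ p.1 < n ∧ Odd (p.1 + m)) ∨ (p.1 = n ∧ p.2 < m ∧ Odd (n + p.2))}
      (fun p => PC p.1.1 p.1.2)
      (fun p => PC p.1.1 p.1.2) := by
  rw [PC]

lemma lf_PC {z : PGame} {n m a b : ℕ}
    (h : (b = m ∧ a < n ∧ Even (a + m)) ∨ (a = n ∧ b < m ∧ Even (n + b)))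
    (hz : z ≤ PC a b) : z ⧏ PC n m := by
  rw [PC_eq n m]
  exact PGame.lf_of_le_moveLeft (i := ⟨(a, b), h⟩) hz

lemma PC_lf {z : PGame} {n m a b : ℕ}
    (h : (b = m ∧ a < n ∧ Odd (a + m)) ∨ (a = n ∧ b < m ∧ Odd (n + b)))
    (hz : PC a b ≤ z) : PC n m ⧏ z := by
  rw [PC_eq n m]
  exact PGame.lf_of_moveRight_le (j := ⟨(a, b), h⟩) hz

lemma PC_le {n m n' m' : ℕ}
    (hL : ∀ a b, ((b = m ∧ a < n ∧ Even (a + m)) ∨ (a = n ∧ b < m ∧ Even (n + b))) →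
      PC a b ⧏ PC n' m')
    (hR : ∀ a b, ((b = m' ∧ a < n' ∧ Odd (a + m')) ∨ (a = n' ∧ b < m' ∧ Odd (n' + b))) →
      PC n m ⧏ PC a b) : PC n m ≤ PC n' m' := by
  rw [PGame.le_iff_forall_lf]
  constructor
  · rw [PC_eq n m]
    rintro ⟨⟨a, b⟩, h⟩
    exact hL a b h
  · rw [PC_eq n' m']
    rintro ⟨⟨a, b⟩, h⟩
    exact hR a b h

lemma PC_main : ∀ n : ℕ,
    (PC (2 * n) 0).Equiv (PC (2 * n + 1) 1) ∧ (PC (2 * n + 1) 0).Equiv (PC (2 * n) 1) := by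
  intro n
  induction n using Nat.strong_induction_on with
  | _ n IH =>
  constructor
  · -- A n : PC (2n) 0 ≡ PC (2n+1) 1
    constructor
    · -- PC (2n) 0 ≤ PC (2n+1) 1
      apply PC_le
      · rintro a b (⟨rfl, ha, hea⟩ | ⟨-, hb, -⟩)
        · -- a even < 2n, use A k: PC a 0 ≤ PC (a+1) 1, a left option of PC (2n+1) 1
          rw [Nat.even_iff] at hea
          obtain ⟨k, rfl⟩ : ∃ k, a = 2 * k := ⟨a / 2, by omega⟩
          exact lf_PC (Or.inl ⟨rfl, by omega, by rw [Nat.even_iff]; omega⟩)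
            (IH k (by omega)).1.1
        · omega
      · rintro a b (⟨rfl, ha, hoa⟩ | ⟨rfl, hb, -⟩)
        · -- right option PC a 1 with a even ≤ 2n
          rw [Nat.odd_iff] at hoa
          rcases Nat.lt_or_ge a (2 * n) with h | h
          · -- a = 2k, k < n: right option PC (a+1) 0 of PC (2n) 0, B k
            obtain ⟨k, rfl⟩ : ∃ k, a = 2 * k := ⟨a / 2, by omega⟩
            exact PC_lf (Or.inl ⟨rfl, by omega, by rw [Nat.odd_iff]; omega⟩)
              (IH k (by omega)).2.1
          · -- a = 2n: PC (2n) 0 ⧏ PC (2n) 1 via column left option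
            obtain rfl : a = 2 * n := by omega
            exact lf_PC (Or.inr ⟨rfl, by omega, by rw [Nat.even_iff]; omega⟩)
              PGame.le_rfl
        · -- a = 2n+1, b = 0: PC (2n) 0 ⧏ PC (2n+1) 0 via its left option PC (2n) 0
          obtain rfl : b = 0 := by omega
          exact lf_PC (Or.inl ⟨rfl, by omega, by rw [Nat.even_iff]; omega⟩) PGame.le_rfl
    · -- PC (2n+1) 1 ≤ PC (2n) 0
      apply PC_le
      · rintro a b (⟨rfl, ha, hea⟩ | ⟨-, hb, hoe⟩)
        · -- a odd < 2n+1, a = 2k+1, k < n, A k symm; left option PC (2k) 0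
          rw [Nat.even_iff, Nat.add_mod] at hea
          obtain ⟨k, rfl⟩ : ∃ k, a = 2 * k + 1 := ⟨a / 2, by omega⟩
          exact lf_PC (Or.inl ⟨rfl, by omega, by rw [Nat.even_iff]; omega⟩)
            (IH k (by omega)).1.2
        · -- impossible: Even (2n+1+b), b < 1
          rw [Nat.even_iff, Nat.add_mod] at hoe; omega
      · rintro a b (⟨rfl, ha, hoa⟩ | ⟨-, hb, -⟩)
        · -- right option PC a 0 of PC (2n) 0, a odd = 2k+1 < 2n; use right option PC (2k) 1
          rw [Nat.odd_iff] at hoa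
          obtain ⟨k, rfl⟩ : ∃ k, a = 2 * k + 1 := ⟨a / 2, by omega⟩
          exact PC_lf (Or.inl ⟨rfl, by omega, by rw [Nat.odd_iff]; omega⟩)
            (IH k (by omega)).2.2
        · omega
  · -- B n : PC (2n+1) 0 ≡ PC (2n) 1
    constructor
    · -- PC (2n+1) 0 ≤ PC (2n) 1
      apply PC_le
      · rintro a b (⟨rfl, ha, hea⟩ | ⟨-, hb, -⟩)
        · rw [Nat.even_iff] at hea
          obtain ⟨k, rfl⟩ : ∃ k, a = 2 * k := ⟨a / 2, by omega⟩
          rcases Nat.lt_or_ge k n with h | h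
          · -- A k, left option PC (2k+1) 1 of PC (2n) 1
            exact lf_PC (Or.inl ⟨rfl, by omega, by rw [Nat.even_iff]; omega⟩)
              (IH k h).1.1
          · -- k = n: PC (2n) 0 is a column left option of PC (2n) 1
            obtain rfl : k = n := by omega
            exact lf_PC (Or.inr ⟨rfl, by omega, by rw [Nat.even_iff]; omega⟩) PGame.le_rfl
        · omega
      · rintro a b (⟨rfl, ha, hoa⟩ | ⟨-, hb, hoe⟩)
        · -- a even < 2n, a = 2k: right option PC (2k+1) 0 of PC (2n+1) 0, B k
          rw [Nat.odd_iff, Nat.add_mod] at hoa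
          obtain ⟨k, rfl⟩ : ∃ k, a = 2 * k := ⟨a / 2, by omega⟩
          exact PC_lf (Or.inl ⟨rfl, by omega, by rw [Nat.odd_iff]; omega⟩)
            (IH k (by omega)).2.1
        · rw [Nat.odd_iff, Nat.add_mod] at hoe; omega
    · -- PC (2n) 1 ≤ PC (2n+1) 0
      apply PC_le
      · rintro a b (⟨rfl, ha, hea⟩ | ⟨rfl, hb, -⟩)
        · -- a odd < 2n, a = 2k+1: A k symm, left option PC (2k) 0 of PC (2n+1) 0
          rw [Nat.even_iff, Nat.add_mod] at hea
          obtain ⟨k, rfl⟩ : ∃ k, a = 2 * k + 1 := ⟨a / 2, by omega⟩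
          exact lf_PC (Or.inl ⟨rfl, by omega, by rw [Nat.even_iff]; omega⟩)
            (IH k (by omega)).1.2
        · -- b = 0: PC (2n) 0 left option of PC (2n+1) 0
          obtain rfl : b = 0 := by omega
          exact lf_PC (Or.inl ⟨rfl, by omega, by rw [Nat.even_iff]; omega⟩) PGame.le_rfl
      · rintro a b (⟨rfl, ha, hoa⟩ | ⟨-, hb, -⟩)
        · -- a odd < 2n+1, a = 2k+1 ≤ 2n-1: right option PC (2k) 1 of PC (2n) 1, B k symm
          rw [Nat.odd_iff] at hoa
          obtain ⟨k, rfl⟩ : ∃ k, a = 2 * k + 1 := ⟨a / 2, by omega⟩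
          exact PC_lf (Or.inl ⟨rfl, by omega, by rw [Nat.odd_iff]; omega⟩)
            (IH k (by omega)).2.2
        · omega

theorem stmt_8 (n : ℕ) : (PC (2 * n) 0).Equiv (PC (2 * n + 1) 1) := by
  exact (PC_main n).1
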